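/- Let G be a group with trivial center and N ⊴ G a normal subgroup such that N is simple and G/N is abelian. Then every non-injective group homomorphism f: G → H factors through the quotient map q: G → G/N, i.e., there exists g: G/N → H with f = g ∘ q. -/
import Mathlib


/-- if `G` has trivial center, `N ⊴ G` is simple (as a group) and `G/N`
is abelian, then every non-injective homomorphism `f : G → H` factors through the
quotient map `G → G/N`. -/
theorem statement12 {G H : Type*} [Group G] [Group H]
    (hZ : Subgroup.center G = ⊥)
    (N : Subgroup G) [N.Normal] [IsSimpleGroup N]
    (hab : ∀ a b : G ⧸ N, a * b = b * a)
    (f : G →* H) (hf : ¬ Function.Injective f) :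
    ∃ g : G ⧸ N →* H, f = g.comp (QuotientGroup.mk' N) := by
  set K := f.ker with hK
  have hKnormal : K.Normal := MonoidHom.normal_ker f
  -- commutators land in N
  have hcommN : ∀ a b : G, a * b * a⁻¹ * b⁻¹ ∈ N := by
    intro a b
    have := hab (QuotientGroup.mk a) (QuotientGroup.mk b)
    have : QuotientGroup.mk (s := N) (a * b * a⁻¹ * b⁻¹) = (1 : G ⧸ N) := by
      simp only [QuotientGroup.mk_mul, QuotientGroup.mk_inv]
      rw [this]
      group
    rwa [QuotientGroup.eq_one_iff] at this
  have hKN : (K.subgroupOf N).Normal := hKnormal.subgroupOf N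
  have hN : N ≤ K := by
    rcases hKN.eq_bot_or_eq_top with hbot | htop
    · -- then K is central, so trivial, contradiction
      rw [Subgroup.subgroupOf_eq_bot] at hbot
      exfalso
      apply hf
      rw [← MonoidHom.ker_eq_bot_iff]
      have hKbot : K = ⊥ := by
        rw [eq_bot_iff]
        intro k hk
        have hkcenter : k ∈ Subgroup.center G := by
          rw [Subgroup.mem_center_iff]
          intro g
          have h1 : k * g * k⁻¹ * g⁻¹ ∈ K := by
            have : k * (g * k⁻¹ * g⁻¹) ∈ K :=
              K.mul_mem hk (hKnormal.conj_mem _ (K.inv_mem hk) g)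
            simpa [mul_assoc] using this
          have h2 : k * g * k⁻¹ * g⁻¹ ∈ N := hcommN k g
          have : k * g * k⁻¹ * g⁻¹ ∈ K ⊓ N := ⟨h1, h2⟩
          rw [(disjoint_iff.mp hbot : K ⊓ N = ⊥)] at this
          have : k * g * k⁻¹ * g⁻¹ = 1 := this
          have := mul_eq_one_iff_eq_inv.mp this
          -- k * g * k⁻¹ = g
          have hkg : k * g * k⁻¹ = g := by simpa using this
          calc g * k = k * g * k⁻¹ * k := by rw [hkg]
            _ = k * g := by group
        rw [hZ] at hkcenter
        simpa using hkcenter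
      exact hKbot
    · rwa [Subgroup.subgroupOf_eq_top] at htop
  refine ⟨QuotientGroup.lift N f hN, ?_⟩
  ext x
  simp
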